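/- (Core of Theorem 1.) Suppose m > 0, K_d ≥ 0, v_{w,max} ≥ 0, and f_planar ∈ ℝ with f_planar > K_d·v_{w,max}², and set a_max = (f_planar − K_d·v_{w,max}²)/m. Let c₃ > 0, let S* = max_{h ∈ [−1,1]} S(h), and suppose the sigmoid timespan satisfies τ_f ≥ (2c₃/a_max)·√S* with τ_f > 0 and c₂ = 2c₃/τ_f. Then for all τ ∈ ℝ, m·√(v(τ)²·φ′(τ)² + v′(τ)²) + K_d·v_{w,max}² ≤ f_planar; i.e., the sigmoid trajectory never requires planar force exceeding f_planar. -/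

import Mathlib

lemma tanh_hasDerivAt (x : ℝ) :
    HasDerivAt Real.tanh (1 - Real.tanh x ^ 2) x := by
  have hc := Real.hasDerivAt_cosh x
  have hs := Real.hasDerivAt_sinh x
  have hcos : Real.cosh x ≠ 0 := (Real.cosh_pos x).ne'
  have h := hs.div hc hcos
  have heq : ∀ y, Real.tanh y = Real.sinh y / Real.cosh y := fun y =>
    Real.tanh_eq_sinh_div_cosh y
  have h2 : HasDerivAt Real.tanh
      ((Real.cosh x * Real.cosh x - Real.sinh x * Real.sinh x) / Real.cosh x ^ 2) x :=
    h.congr_of_eventuallyEq (by filter_upwards with y using heq y)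
  convert h2 using 1
  rw [Real.tanh_eq_sinh_div_cosh]
  have h3 : Real.cosh x ^ 2 - Real.sinh x ^ 2 = 1 := Real.cosh_sq_sub_sinh_sq x
  field_simp

lemma tanh_mem_Icc (x : ℝ) : Real.tanh x ∈ Set.Icc (-1 : ℝ) 1 := by
  have h1 : Real.sinh x < Real.cosh x := Real.sinh_lt_cosh x
  have h2 : Real.sinh (-x) < Real.cosh (-x) := Real.sinh_lt_cosh (-x)
  rw [Real.sinh_neg, Real.cosh_neg] at h2
  have hc := Real.cosh_pos x
  rw [Real.tanh_eq_sinh_div_cosh]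
  constructor
  · rw [le_div_iff₀ hc]; linarith
  · rw [div_le_iff₀ hc]; linarith

/-- Core of Theorem 1: if the sigmoid timespan satisfies `τ_f ≥ (2c₃/a_max)·√S*`, where
`S*` is the maximum of `S(h) = (c₁·(d₁h + d₄)·(1 − h²))² + (d₁·(1 − h²))²` on `[−1, 1]` and
`a_max = (f_planar − K_d·v_wmax²)/m`, then with rate `c₂ = 2c₃/τ_f` the sigmoid trajectory
never requires planar force exceeding `f_planar`:
`m·√(v²φ′² + v′²) + K_d·v_wmax² ≤ f_planar` for all `τ`. -/
theorem sigmoid_timespan_respects_thrust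
    (m K_d v_wmax f_planar a_max : ℝ)
    (hm : 0 < m) (hKd : 0 ≤ K_d) (hvw : 0 ≤ v_wmax)
    (hf : K_d * v_wmax ^ 2 < f_planar)
    (ha : a_max = (f_planar - K_d * v_wmax ^ 2) / m)
    (c₁ c₂ c₃ c₄ d₁ d₄ τ_f Sstar : ℝ)
    (hc₃ : 0 < c₃) (hτf : 0 < τ_f) (hc₂ : c₂ = 2 * c₃ / τ_f)
    (S φ v : ℝ → ℝ)
    (hS : ∀ h, S h = (c₁ * (d₁ * h + d₄) * (1 - h ^ 2)) ^ 2 + (d₁ * (1 - h ^ 2)) ^ 2)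
    (hSstar : IsGreatest (S '' Set.Icc (-1 : ℝ) 1) Sstar)
    (hτ : τ_f ≥ 2 * c₃ / a_max * Real.sqrt Sstar)
    (hφ : ∀ τ, φ τ = c₁ * Real.tanh (c₂ * τ - c₃) + c₄)
    (hv : ∀ τ, v τ = d₁ * Real.tanh (c₂ * τ - c₃) + d₄) :
    ∀ τ : ℝ,
      m * Real.sqrt ((v τ) ^ 2 * (deriv φ τ) ^ 2 + (deriv v τ) ^ 2) +
        K_d * v_wmax ^ 2 ≤ f_planar := by
  intro τ
  have hc₂pos : 0 < c₂ := by rw [hc₂]; positivity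
  have hamax : 0 < a_max := by rw [ha]; exact div_pos (by linarith) hm
  set t : ℝ := Real.tanh (c₂ * τ - c₃) with ht
  -- derivatives
  have hinner : HasDerivAt (fun τ : ℝ => c₂ * τ - c₃) c₂ τ := by
    simpa using ((hasDerivAt_id τ).const_mul c₂).sub_const c₃
  have htanh : HasDerivAt (fun τ : ℝ => Real.tanh (c₂ * τ - c₃)) ((1 - t ^ 2) * c₂) τ :=
    (tanh_hasDerivAt (c₂ * τ - c₃)).comp τ (h := fun τ : ℝ => c₂ * τ - c₃) hinner
  have hφ' : deriv φ τ = c₁ * ((1 - t ^ 2) * c₂) := by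
    have : HasDerivAt φ (c₁ * ((1 - t ^ 2) * c₂)) τ := by
      have := (htanh.const_mul c₁).add_const c₄
      refine HasDerivAt.congr_of_eventuallyEq this ?_
      filter_upwards with x; rw [hφ x]
    exact this.deriv
  have hv' : deriv v τ = d₁ * ((1 - t ^ 2) * c₂) := by
    have : HasDerivAt v (d₁ * ((1 - t ^ 2) * c₂)) τ := by
      have := (htanh.const_mul d₁).add_const d₄
      refine HasDerivAt.congr_of_eventuallyEq this ?_
      filter_upwards with x; rw [hv x]
    exact this.deriv
  -- key algebraic identity
  have hkey : (v τ) ^ 2 * (deriv φ τ) ^ 2 + (deriv v τ) ^ 2 = c₂ ^ 2 * S t := by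
    rw [hφ', hv', hv τ, hS t]; ring
  -- S t ≤ Sstar
  have hSt : S t ≤ Sstar := hSstar.2 ⟨t, tanh_mem_Icc _, rfl⟩
  have hStnn : 0 ≤ S t := by rw [hS t]; positivity
  have hSsnn : 0 ≤ Sstar := le_trans hStnn hSt
  -- sqrt bound
  have hsqrt : Real.sqrt ((v τ) ^ 2 * (deriv φ τ) ^ 2 + (deriv v τ) ^ 2)
      ≤ c₂ * Real.sqrt Sstar := by
    rw [hkey, Real.sqrt_mul (by positivity), Real.sqrt_sq hc₂pos.le]
    exact mul_le_mul_of_nonneg_left (Real.sqrt_le_sqrt hSt) hc₂pos.le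
  -- c₂ * sqrt Sstar ≤ a_max
  have hca : c₂ * Real.sqrt Sstar ≤ a_max := by
    have h1 : 2 * c₃ / a_max * Real.sqrt Sstar * a_max = 2 * c₃ * Real.sqrt Sstar := by
      field_simp
    have h2 : 2 * c₃ * Real.sqrt Sstar ≤ τ_f * a_max := by
      have := mul_le_mul_of_nonneg_right hτ hamax.le
      linarith [h1 ▸ this]
    rw [hc₂, div_mul_eq_mul_div, div_le_iff₀ hτf]
    linarith
  have : m * Real.sqrt ((v τ) ^ 2 * (deriv φ τ) ^ 2 + (deriv v τ) ^ 2)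
      ≤ m * a_max := mul_le_mul_of_nonneg_left (le_trans hsqrt hca) hm.le
  have hma : m * a_max = f_planar - K_d * v_wmax ^ 2 := by
    rw [ha]; field_simp
  linarith
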